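/- There exist constants 0 < c_5 ≤ c_6, depending only on a and β, such that for every integer j ≥ 1 and every rectangle R ∈ 𝒦_j, letting c_R denote the center of R and T_R(x) := j^{(β−1)a} x + c_R (i.e. T_R(x)_i = j^{a_i(β−1)} x_i + (c_R)_i), one has T_R(c_5 [−1,1]^d) ⊆ R ⊆ T_R(c_6 [−1,1]^d). -/

import Mathlib

open MeasureTheory

noncomputable section

/-- Number of outer intervals on each side at level `j`: `⌈j^{a-1}⌉`. -/
def mOut (a : ℝ) (j : ℕ) : ℤ := ⌈(j : ℝ) ^ (a - 1)⌉

/-- Number of inner intervals at level `j`: `⌈j^{a}⌉`. -/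
def mIn (a : ℝ) (j : ℕ) : ℤ := ⌈(j : ℝ) ^ a⌉

/-- Total number of intervals in the partition `𝒜_j^i`. -/
def numIv (a : ℝ) (j : ℕ) : ℤ := mIn a j + 2 * mOut a j

/-- Common length of the outer intervals. -/
def lenO (a β : ℝ) (j : ℕ) : ℝ :=
  (((j : ℝ) + 1) ^ (a * β) - (j : ℝ) ^ (a * β)) / ((mOut a j : ℤ) : ℝ)

/-- Common length of the inner intervals. -/
def lenI (a β : ℝ) (j : ℕ) : ℝ :=
  2 * (j : ℝ) ^ (a * β) / ((mIn a j : ℤ) : ℝ)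

/-- The `k`-th knot (from the left, `k = 0, …, numIv`) of the partition `𝒜_j^i` of
`A_j^i = [−(j+1)^{aβ}, (j+1)^{aβ})`: the two components of `A_j^i ∖ B_j^i` are divided
into `⌈j^{a-1}⌉` equal intervals each, and `B_j^i = [−j^{aβ}, j^{aβ})` into `⌈j^{a}⌉`
equal intervals. -/
def knot (a β : ℝ) (j : ℕ) (k : ℤ) : ℝ :=
  if k ≤ mOut a j then -((j : ℝ) + 1) ^ (a * β) + (k : ℝ) * lenO a β j
  else if k ≤ mOut a j + mIn a j then
    -(j : ℝ) ^ (a * β) + ((k - mOut a j : ℤ) : ℝ) * lenI a β j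
  else (j : ℝ) ^ (a * β) + ((k - mOut a j - mIn a j : ℤ) : ℝ) * lenO a β j

/-- The `k`-th interval of the partition `𝒜_j^i`. -/
def ivl (a β : ℝ) (j : ℕ) (k : ℤ) : Set ℝ :=
  Set.Ico (knot a β j k) (knot a β j (k + 1))

/-- The partition `𝒜_j^i` (with `a = a_i`), as a family of subsets of `ℝ`. -/
def partA (a β : ℝ) (j : ℕ) : Set (Set ℝ) :=
  {I | ∃ k : ℤ, 0 ≤ k ∧ k < numIv a j ∧ I = ivl a β j k}

/-- The index `k` corresponds to an inner interval. -/
def isInnerIdx (a : ℝ) (j : ℕ) (k : ℤ) : Prop :=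
  mOut a j ≤ k ∧ k < mOut a j + mIn a j

/-- The family `ℬ_j^i` of inner intervals. -/
def partInner (a β : ℝ) (j : ℕ) : Set (Set ℝ) :=
  {I | ∃ k : ℤ, isInnerIdx a j k ∧ I = ivl a β j k}

/-- `𝒜_j`: rectangles `I_1 × ⋯ × I_d` with `I_i ∈ 𝒜_j^i`, encoded by their factors. -/
def rectA {d : ℕ} (a : Fin d → ℝ) (β : ℝ) (j : ℕ) : Set (Fin d → Set ℝ) :=
  {R | ∀ i, R i ∈ partA (a i) β j}

/-- `ℬ_j`: rectangles all of whose factors are inner intervals. -/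
def rectB {d : ℕ} (a : Fin d → ℝ) (β : ℝ) (j : ℕ) : Set (Fin d → Set ℝ) :=
  {R | ∀ i, R i ∈ partInner (a i) β j}

/-- `𝒦_j := 𝒜_j ∖ ℬ_j` for `j ≥ 1`. -/
def rectK {d : ℕ} (a : Fin d → ℝ) (β : ℝ) (j : ℕ) : Set (Fin d → Set ℝ) :=
  rectA a β j \ rectB a β j

/-- `𝒦_0 := {[−1,1)^d}`. -/
def rectK0 (d : ℕ) : Set (Fin d → Set ℝ) := {fun _ => Set.Ico (-1 : ℝ) 1}

/-- `𝒦 := ⋃_{j ≥ 0} 𝒦_j`. -/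
def rectKall {d : ℕ} (a : Fin d → ℝ) (β : ℝ) : Set (Fin d → Set ℝ) :=
  rectK0 d ∪ ⋃ (j : ℕ) (_ : 1 ≤ j), rectK a β j

/-- The volume `|R|` of a rectangle, the product of its side lengths. -/
def rVol {d : ℕ} (R : Fin d → Set ℝ) : ℝ := ∏ i, (volume (R i)).toReal

/-- The center of a rectangle (coordinatewise midpoint). -/
def ctr {d : ℕ} (R : Fin d → Set ℝ) (i : Fin d) : ℝ := (sInf (R i) + sSup (R i)) / 2

/-- The affine transform `T_R(x) := j^{(β−1)a} x + c_R`, i.e.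
`T_R(x)_i = j^{a_i(β−1)} x_i + (c_R)_i`. -/
def affT {d : ℕ} (a : Fin d → ℝ) (β : ℝ) (j : ℕ) (R : Fin d → Set ℝ)
    (x : Fin d → ℝ) : Fin d → ℝ :=
  fun i => (j : ℝ) ^ (a i * (β - 1)) * x i + ctr R i

section aux
variable {a β : ℝ} {j : ℕ}

lemma jpos (hj : 1 ≤ j) : (0:ℝ) < (j:ℝ) := by exact_mod_cast Nat.lt_of_lt_of_le Nat.zero_lt_one hj

lemma one_le_jpow (hj : 1 ≤ j) {x : ℝ} (hx : 0 ≤ x) : 1 ≤ (j:ℝ) ^ x :=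
  Real.one_le_rpow (by exact_mod_cast hj) hx

lemma mOut_lb (ha : 1 ≤ a) (hj : 1 ≤ j) : (j:ℝ) ^ (a-1) ≤ ((mOut a j : ℤ) : ℝ) :=
  Int.le_ceil _

lemma mOut_ub (ha : 1 ≤ a) (hj : 1 ≤ j) : ((mOut a j : ℤ) : ℝ) ≤ 2 * (j:ℝ) ^ (a-1) := by
  have h1 : 1 ≤ (j:ℝ) ^ (a-1) := one_le_jpow hj (by linarith)
  have := Int.ceil_lt_add_one ((j:ℝ) ^ (a-1))
  unfold mOut; linarith

lemma mOut_pos (ha : 1 ≤ a) (hj : 1 ≤ j) : 1 ≤ mOut a j := by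
  have h1 : 1 ≤ (j:ℝ) ^ (a-1) := one_le_jpow hj (by linarith)
  exact Int.ceil_pos.2 (by linarith)

lemma mIn_lb (ha : 1 ≤ a) (hj : 1 ≤ j) : (j:ℝ) ^ a ≤ ((mIn a j : ℤ) : ℝ) := Int.le_ceil _

lemma mIn_ub (ha : 1 ≤ a) (hj : 1 ≤ j) : ((mIn a j : ℤ) : ℝ) ≤ 2 * (j:ℝ) ^ a := by
  have h1 : 1 ≤ (j:ℝ) ^ a := one_le_jpow hj (by linarith)
  have := Int.ceil_lt_add_one ((j:ℝ) ^ a)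
  unfold mIn; linarith

lemma mIn_pos (ha : 1 ≤ a) (hj : 1 ≤ j) : 1 ≤ mIn a j := by
  have h1 : 1 ≤ (j:ℝ) ^ a := one_le_jpow hj (by linarith)
  exact Int.ceil_pos.2 (by linarith)

-- Bernoulli-based bounds on the numerator of lenO
lemma num_lb {p : ℝ} (hp : 1 ≤ p) (hj : 1 ≤ j) :
    (j:ℝ) ^ (p-1) ≤ ((j:ℝ)+1) ^ p - (j:ℝ) ^ p := by
  have hjp : (0:ℝ) < (j:ℝ) := by exact_mod_cast hj
  have hb := one_add_mul_self_le_rpow_one_add (s := 1/(j:ℝ)) (le_trans (by norm_num) (by positivity : (0:ℝ) ≤ 1/(j:ℝ))) hp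
  have h1 : ((1:ℝ) + 1/(j:ℝ)) ^ p = ((j:ℝ)+1) ^ p / (j:ℝ) ^ p := by
    rw [show (1:ℝ) + 1/(j:ℝ) = ((j:ℝ)+1)/(j:ℝ) by field_simp]
    exact Real.div_rpow (by positivity) hjp.le p
  rw [h1] at hb
  have h2 : (j:ℝ) ^ (p-1) = (j:ℝ) ^ p / (j:ℝ) := by
    rw [Real.rpow_sub hjp, Real.rpow_one]
  have hps : (0:ℝ) < (j:ℝ) ^ p := Real.rpow_pos_of_pos hjp p
  rw [le_div_iff₀ hps] at hb
  have hb2 : (j:ℝ)^p + p * (j:ℝ)^(p-1) ≤ ((j:ℝ)+1)^p := by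
    have h3 : (1 + p*(1/(j:ℝ))) * (j:ℝ)^p = (j:ℝ)^p + p * ((j:ℝ)^p / (j:ℝ)) := by
      field_simp
    rw [h3, ← h2] at hb; linarith
  nlinarith [Real.rpow_pos_of_pos hjp (p-1)]

lemma num_ub {p : ℝ} (hp : 1 ≤ p) (hj : 1 ≤ j) :
    ((j:ℝ)+1) ^ p - (j:ℝ) ^ p ≤ p * 2 ^ (p-1) * (j:ℝ) ^ (p-1) := by
  have hjp : (0:ℝ) < (j:ℝ) := by exact_mod_cast hj
  have hj1 : (1:ℝ) ≤ (j:ℝ) := by exact_mod_cast hj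
  have hs : (-1:ℝ) ≤ -1/((j:ℝ)+1) := by
    rw [neg_div, neg_le_neg_iff, div_le_one (by positivity)]; linarith
  have hb := one_add_mul_self_le_rpow_one_add (s := -1/((j:ℝ)+1)) hs hp
  have h1 : ((1:ℝ) + -1/((j:ℝ)+1)) ^ p = (j:ℝ) ^ p / ((j:ℝ)+1) ^ p := by
    rw [show (1:ℝ) + -1/((j:ℝ)+1) = (j:ℝ)/((j:ℝ)+1) by field_simp; ring]
    exact Real.div_rpow hjp.le (by positivity) p
  rw [h1] at hb
  have hps : (0:ℝ) < ((j:ℝ)+1) ^ p := Real.rpow_pos_of_pos (by positivity) p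
  have key : ((j:ℝ)+1) ^ p - (j:ℝ) ^ p ≤ p * ((j:ℝ)+1) ^ (p-1) := by
    have h2 : ((j:ℝ)+1) ^ (p-1) = ((j:ℝ)+1) ^ p / ((j:ℝ)+1) := by
      rw [Real.rpow_sub (by positivity), Real.rpow_one]
    rw [h2]
    rw [le_div_iff₀ hps] at hb
    have : (1 + -1/((j:ℝ)+1)) * ((j:ℝ)+1)^p = ((j:ℝ)+1)^p - ((j:ℝ)+1)^p/((j:ℝ)+1) := by
      field_simp; ring
    nlinarith [div_nonneg hps.le (by positivity : (0:ℝ) ≤ (j:ℝ)+1)]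
  refine key.trans ?_
  have h3 : ((j:ℝ)+1) ^ (p-1) ≤ (2*(j:ℝ)) ^ (p-1) :=
    Real.rpow_le_rpow (by positivity) (by linarith) (by linarith)
  have h4 : ((2:ℝ)*(j:ℝ)) ^ (p-1) = 2 ^ (p-1) * (j:ℝ) ^ (p-1) :=
    Real.mul_rpow (by norm_num) hjp.le
  have hp0 : (0:ℝ) < p := by linarith
  nlinarith [h3, h4.le, Real.rpow_pos_of_pos hjp (p-1)]

lemma jpow_split (hj : 1 ≤ j) (x y : ℝ) : (j:ℝ) ^ (x + y) = (j:ℝ) ^ x * (j:ℝ) ^ y :=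
  Real.rpow_add (jpos hj) x y

lemma lenO_lb (ha : 1 ≤ a) (hβ : 1 ≤ β) (hj : 1 ≤ j) :
    (j:ℝ) ^ (a*(β-1)) / 2 ≤ lenO a β j := by
  have hjp := jpos (j := j) hj
  have hp : 1 ≤ a * β := by nlinarith
  have hN := num_lb hp hj
  have hm1 := mOut_lb ha hj
  have hm2 := mOut_ub ha hj
  have hmp : (0:ℝ) < ((mOut a j : ℤ):ℝ) := lt_of_lt_of_le (Real.rpow_pos_of_pos hjp _) hm1
  have hsplit : (j:ℝ) ^ (a*β-1) = (j:ℝ) ^ (a*(β-1)) * (j:ℝ) ^ (a-1) := by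
    rw [← jpow_split hj]; ring_nf
  have hs0 : (0:ℝ) < (j:ℝ) ^ (a*(β-1)) := Real.rpow_pos_of_pos hjp _
  have hso : (0:ℝ) < (j:ℝ) ^ (a-1) := Real.rpow_pos_of_pos hjp _
  rw [lenO, le_div_iff₀ hmp]
  nlinarith [hN, hm2, hs0.le, hso.le, hsplit]

lemma lenO_ub (ha : 1 ≤ a) (hβ : 1 ≤ β) (hj : 1 ≤ j) :
    lenO a β j ≤ (a*β) * 2 ^ (a*β-1) * (j:ℝ) ^ (a*(β-1)) := by
  have hjp := jpos (j := j) hj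
  have hp : 1 ≤ a * β := by nlinarith
  have hN := num_ub hp hj
  have hm1 := mOut_lb ha hj
  have hmp : (0:ℝ) < ((mOut a j : ℤ):ℝ) := lt_of_lt_of_le (Real.rpow_pos_of_pos hjp _) hm1
  have hsplit : (j:ℝ) ^ (a*β-1) = (j:ℝ) ^ (a*(β-1)) * (j:ℝ) ^ (a-1) := by
    rw [← jpow_split hj]; ring_nf
  have hs0 : (0:ℝ) < (j:ℝ) ^ (a*(β-1)) := Real.rpow_pos_of_pos hjp _
  have hC : (0:ℝ) ≤ (a*β) * 2 ^ (a*β-1) * (j:ℝ) ^ (a*(β-1)) := by positivity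
  rw [lenO, div_le_iff₀ hmp]
  nlinarith [hN, hs0.le, hsplit, mul_le_mul_of_nonneg_left hm1 hC]

lemma lenI_lb (ha : 1 ≤ a) (hβ : 1 ≤ β) (hj : 1 ≤ j) :
    (j:ℝ) ^ (a*(β-1)) ≤ lenI a β j := by
  have hjp := jpos (j := j) hj
  have hm1 := mIn_lb ha hj
  have hm2 := mIn_ub ha hj
  have hmp : (0:ℝ) < ((mIn a j : ℤ):ℝ) := lt_of_lt_of_le (Real.rpow_pos_of_pos hjp _) hm1
  have hsplit : (j:ℝ) ^ (a*β) = (j:ℝ) ^ (a*(β-1)) * (j:ℝ) ^ a := by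
    rw [← jpow_split hj]; ring_nf
  have hs0 : (0:ℝ) < (j:ℝ) ^ (a*(β-1)) := Real.rpow_pos_of_pos hjp _
  rw [lenI, le_div_iff₀ hmp]
  nlinarith [hs0.le, hsplit, hm2]

lemma lenI_ub (ha : 1 ≤ a) (hβ : 1 ≤ β) (hj : 1 ≤ j) :
    lenI a β j ≤ 2 * (j:ℝ) ^ (a*(β-1)) := by
  have hjp := jpos (j := j) hj
  have hm1 := mIn_lb ha hj
  have hmp : (0:ℝ) < ((mIn a j : ℤ):ℝ) := lt_of_lt_of_le (Real.rpow_pos_of_pos hjp _) hm1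
  have hsplit : (j:ℝ) ^ (a*β) = (j:ℝ) ^ (a*(β-1)) * (j:ℝ) ^ a := by
    rw [← jpow_split hj]; ring_nf
  have hs0 : (0:ℝ) < (j:ℝ) ^ (a*(β-1)) := Real.rpow_pos_of_pos hjp _
  rw [lenI, div_le_iff₀ hmp]
  nlinarith [hs0.le, hsplit, hm1]

lemma mOut_mul_lenO (ha : 1 ≤ a) (hβ : 1 ≤ β) (hj : 1 ≤ j) :
    ((mOut a j : ℤ):ℝ) * lenO a β j = ((j:ℝ)+1)^(a*β) - (j:ℝ)^(a*β) := by
  have hm0 : ((mOut a j : ℤ):ℝ) ≠ 0 := by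
    have := mOut_pos ha hj; exact_mod_cast (by omega : mOut a j ≠ 0)
  rw [lenO, mul_comm, div_mul_cancel₀ _ hm0]

lemma mIn_mul_lenI (ha : 1 ≤ a) (hβ : 1 ≤ β) (hj : 1 ≤ j) :
    ((mIn a j : ℤ):ℝ) * lenI a β j = 2 * (j:ℝ)^(a*β) := by
  have hm0 : ((mIn a j : ℤ):ℝ) ≠ 0 := by
    have := mIn_pos ha hj; exact_mod_cast (by omega : mIn a j ≠ 0)
  rw [lenI, mul_comm, div_mul_cancel₀ _ hm0]

lemma knot1 {k : ℤ} (hk : k ≤ mOut a j) :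
    knot a β j k = -((j:ℝ)+1)^(a*β) + (k:ℝ) * lenO a β j := by rw [knot, if_pos hk]

lemma knot2 {k : ℤ} (h1 : ¬ k ≤ mOut a j) (h2 : k ≤ mOut a j + mIn a j) :
    knot a β j k = -(j:ℝ)^(a*β) + ((k - mOut a j : ℤ):ℝ) * lenI a β j := by
  rw [knot, if_neg h1, if_pos h2]

lemma knot3 {k : ℤ} (h1 : ¬ k ≤ mOut a j) (h2 : ¬ k ≤ mOut a j + mIn a j) :
    knot a β j k = (j:ℝ)^(a*β) + ((k - mOut a j - mIn a j : ℤ):ℝ) * lenO a β j := by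
  rw [knot, if_neg h1, if_neg h2]

lemma knot_sub (ha : 1 ≤ a) (hβ : 1 ≤ β) (hj : 1 ≤ j) {k : ℤ} (h0 : 0 ≤ k)
    (h1 : k < numIv a j) :
    knot a β j (k+1) - knot a β j k = lenO a β j ∨
      knot a β j (k+1) - knot a β j k = lenI a β j := by
  have hmO := mOut_pos ha hj
  have hmI := mIn_pos ha hj
  have h1' : k < mIn a j + 2 * mOut a j := h1
  have hO := mOut_mul_lenO ha hβ hj
  have hI := mIn_mul_lenI ha hβ hj
  by_cases hA : k + 1 ≤ mOut a j
  · left; rw [knot1 hA, knot1 (by omega)]; push_cast; ring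
  · by_cases hB : k ≤ mOut a j
    · right
      rw [knot2 hA (by omega), knot1 hB]
      have hk : k = mOut a j := le_antisymm hB (by omega)
      rw [hk]; push_cast; linear_combination -hO
    · by_cases hC : k + 1 ≤ mOut a j + mIn a j
      · right; rw [knot2 (by omega) hC, knot2 hB (by omega)]; push_cast; ring
      · by_cases hD : k ≤ mOut a j + mIn a j
        · left
          rw [knot3 (by omega) hC, knot2 hB hD]
          have hk : k = mOut a j + mIn a j := le_antisymm hD (by omega)
          rw [hk]; push_cast; linear_combination -hI
        · left; rw [knot3 (by omega) hC, knot3 hB hD]; push_cast; ring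

end aux

/-- Lemma 3.1(c): there are `0 < c₅ ≤ c₆` depending only on `a, β` with
`T_R(c₅[−1,1]^d) ⊆ R ⊆ T_R(c₆[−1,1]^d)` for all `j ≥ 1` and `R ∈ 𝒦_j`. -/
theorem stmt7 (d : ℕ) (hd : 1 ≤ d) (a : Fin d → ℝ) (ha : ∀ i, 1 ≤ a i)
    (β : ℝ) (hβ : 1 ≤ β) :
    ∃ c₅ c₆ : ℝ, 0 < c₅ ∧ c₅ ≤ c₆ ∧ ∀ j : ℕ, 1 ≤ j → ∀ R ∈ rectK a β j,
      affT a β j R '' {x | ∀ i, |x i| ≤ c₅} ⊆ {x | ∀ i, x i ∈ R i} ∧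
        {x | ∀ i, x i ∈ R i} ⊆ affT a β j R '' {x | ∀ i, |x i| ≤ c₆} := by
  classical
  have i0 : Fin d := ⟨0, hd⟩
  set A : ℝ := ∑ i, a i with hA
  have haA : ∀ i, a i ≤ A :=
    fun i => Finset.single_le_sum (f := a) (fun i _ => le_trans zero_le_one (ha i))
      (Finset.mem_univ i)
  have hA1 : (1:ℝ) ≤ A := le_trans (ha i0) (haA i0)
  set P : ℝ := A * β with hP
  have hP1 : (1:ℝ) ≤ P := by nlinarith
  have h2P : (2:ℝ) ≤ 2 ^ P := by
    calc (2:ℝ) = 2 ^ (1:ℝ) := (Real.rpow_one 2).symm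
    _ ≤ 2 ^ P := Real.rpow_le_rpow_of_exponent_le one_le_two hP1
  have h2P0 : (0:ℝ) ≤ 2 ^ P := by positivity
  refine ⟨1/8, P * 2 ^ P, by norm_num, by nlinarith, ?_⟩
  intro j hj R hR
  have hjp : (0:ℝ) < (j:ℝ) := jpos hj
  have hRA : ∀ i, R i ∈ partA (a i) β j := hR.1
  choose k hk0 hk1 hkR using hRA
  have key : ∀ i, (j:ℝ)^(a i*(β-1)) / 2 ≤ knot (a i) β j (k i + 1) - knot (a i) β j (k i)
      ∧ knot (a i) β j (k i + 1) - knot (a i) β j (k i)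
        ≤ 2 * (P * 2 ^ P) * (j:ℝ)^(a i*(β-1)) := by
    intro i
    have hsi : (0:ℝ) < (j:ℝ)^(a i*(β-1)) := Real.rpow_pos_of_pos hjp _
    have hO1 := lenO_lb (ha i) hβ hj
    have hO2 := lenO_ub (ha i) hβ hj
    have hI1 := lenI_lb (ha i) hβ hj
    have hI2 := lenI_ub (ha i) hβ hj
    have hmono : (a i * β) * 2 ^ (a i * β - 1) ≤ P * 2 ^ P := by
      have h1 : a i * β ≤ P := by nlinarith [haA i, ha i]
      have h2 : (2:ℝ) ^ (a i * β - 1) ≤ 2 ^ P :=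
        Real.rpow_le_rpow_of_exponent_le one_le_two (by linarith)
      have h3 : (0:ℝ) ≤ 2 ^ (a i * β - 1) := by positivity
      have h4 : (0:ℝ) < a i * β := by nlinarith [ha i]
      nlinarith
    rcases knot_sub (ha i) hβ hj (hk0 i) (hk1 i) with h | h <;> rw [h]
    · refine ⟨hO1, hO2.trans ?_⟩
      nlinarith [hsi.le]
    · have hPP : (1:ℝ) ≤ P * 2 ^ P := by nlinarith
      exact ⟨le_trans (by linarith) hI1, hI2.trans (by nlinarith [hsi.le])⟩
  have hlu : ∀ i, knot (a i) β j (k i) < knot (a i) β j (k i + 1) := by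
    intro i
    have hsi : (0:ℝ) < (j:ℝ)^(a i*(β-1)) := Real.rpow_pos_of_pos hjp _
    have := (key i).1
    linarith
  have hRi : ∀ i, R i = Set.Ico (knot (a i) β j (k i)) (knot (a i) β j (k i + 1)) := by
    intro i; rw [hkR i]; simp only [ivl]
  have hctr : ∀ i, ctr R i = (knot (a i) β j (k i) + knot (a i) β j (k i + 1)) / 2 := by
    intro i
    simp only [ctr]
    rw [hRi i, csInf_Ico (hlu i), csSup_Ico (hlu i)]
  constructor
  · rintro y ⟨x, hx, rfl⟩ i
    simp only [affT]
    rw [hctr i, hRi i]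
    have hxa := abs_le.1 (hx i)
    have hsi : (0:ℝ) < (j:ℝ)^(a i*(β-1)) := Real.rpow_pos_of_pos hjp _
    have h1 := (key i).1
    have hsx1 : -((j:ℝ)^(a i*(β-1)))/8 ≤ (j:ℝ)^(a i*(β-1)) * x i := by
      nlinarith [hxa.1, hsi.le]
    have hsx2 : (j:ℝ)^(a i*(β-1)) * x i ≤ (j:ℝ)^(a i*(β-1))/8 := by
      nlinarith [hxa.2, hsi.le]
    refine Set.mem_Ico.2 ⟨by linarith, by linarith⟩
  · intro y hy
    refine ⟨fun i => (y i - ctr R i)/(j:ℝ)^(a i*(β-1)), fun i => ?_, ?_⟩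
    · have hyi := hy i
      rw [hRi i] at hyi
      obtain ⟨hy1, hy2⟩ := hyi
      have hsi : (0:ℝ) < (j:ℝ)^(a i*(β-1)) := Real.rpow_pos_of_pos hjp _
      have h2 := (key i).2
      show |(y i - ctr R i) / (j:ℝ)^(a i*(β-1))| ≤ P * 2 ^ P
      rw [hctr i, abs_div, abs_of_pos hsi, div_le_iff₀ hsi, abs_le]
      constructor <;> nlinarith
    · funext i
      simp only [affT]
      have hsi : ((j:ℝ)^(a i*(β-1))) ≠ 0 := (Real.rpow_pos_of_pos hjp _).ne'
      field_simp
      ring
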